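/- arXiv:1301.1947 — 2 statements merged into one kernel-verified Lean document; each statement's English description precedes it below -/
import Mathlib

section
/- For any δ > 0 there is a constant C_δ such that for every Schwartz function u on ℝ, ‖[H, u_x] u_x‖_{L∞} + ‖[H, u] u_{xx}‖_{L∞} ≤ C_δ ‖u_x‖²_{H^{1/2+δ}}. -/
open MeasureTheory SchwartzMap FourierTransform

noncomputable section

/-- The Hilbert transform on ℝ, the Fourier multiplier with symbol `-i · sgn ξ`. -/
def hilbert (f : ℝ → ℂ) : ℝ → ℂ :=
  𝓕⁻ (fun ξ => (-Complex.I) * (Real.sign ξ : ℂ) * 𝓕 f ξ)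

/-- The commutator `[H, a] f = H (a f) - a · H f`. -/
def hcomm (a f : ℝ → ℂ) : ℝ → ℂ := fun x => hilbert (fun y => a y * f y) x - a x * hilbert f x

/-- The `L²` norm. -/
def L2 (f : ℝ → ℂ) : ℝ := (eLpNorm f 2 volume).toReal

/-- The `L^∞` norm. -/
def Loo (f : ℝ → ℂ) : ℝ := (eLpNorm f ⊤ volume).toReal

/-- The `L^p` norm. -/
def LpN (p : ℝ) (f : ℝ → ℂ) : ℝ := (eLpNorm f (ENNReal.ofReal p) volume).toReal

/-- The `H^s` Sobolev norm, `‖(1+ξ²)^{s/2} f̂‖_{L²}`. -/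
def sobolev (s : ℝ) (f : ℝ → ℂ) : ℝ :=
  (eLpNorm (fun ξ => (((1 + ξ ^ 2) ^ (s / 2) : ℝ) : ℂ) * 𝓕 f ξ) 2 volume).toReal

/-- The `L²` pairing `⟨f, g⟩ = ∫ f g`. -/
def pairL2 (f g : ℝ → ℂ) : ℂ := ∫ x : ℝ, f x * g x

end

noncomputable section Aux

open Real Complex

/- ### Elementary facts about `Real.sign` -/

lemma measurable_rsign : Measurable Real.sign := by
  unfold Real.sign
  exact Measurable.ite measurableSet_Iio measurable_const
    (Measurable.ite (measurableSet_Ioi.preimage measurable_id') measurable_const measurable_const)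

lemma abs_rsign_le (r : ℝ) : |Real.sign r| ≤ 1 := by
  rcases Real.sign_apply_eq r with h | h | h <;> rw [h] <;> norm_num

lemma abs_sub_sign_le {ξ η : ℝ} (h : Real.sign ξ ≠ Real.sign η) : |η| ≤ |ξ - η| := by
  have hmul : ξ * η ≤ 0 := by
    by_contra hc
    push_neg at hc
    rcases lt_trichotomy ξ 0 with hx | hx | hx
    · have hy : η < 0 := by nlinarith
      rw [Real.sign_of_neg hx, Real.sign_of_neg hy] at h; exact h rfl
    · subst hx; simp at hc
    · have hy : 0 < η := by nlinarith
      rw [Real.sign_of_pos hx, Real.sign_of_pos hy] at h; exact h rfl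
  nlinarith [abs_nonneg η, abs_nonneg (ξ - η), abs_mul_abs_self η, abs_mul_abs_self (ξ - η),
    sq_nonneg (ξ - η), sq_nonneg ξ]

/- ### The exponential kernel -/

/-- The kernel `e^{2πiξx}`. -/
def EK (x ξ : ℝ) : ℂ := Complex.exp ((2 * π * (ξ * x) : ℝ) * Complex.I)

lemma norm_EK (x ξ : ℝ) : ‖EK x ξ‖ = 1 := by
  rw [EK, Complex.norm_exp_ofReal_mul_I]

lemma EK_comb (ξ ζ y : ℝ) : EK ξ (-y) * EK y ζ = EK (ξ - ζ) (-y) := by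
  rw [EK, EK, EK, ← Complex.exp_add]
  congr 1
  push_cast
  ring

lemma EK_add (x aa bb : ℝ) : EK x aa * EK x bb = EK x (aa + bb) := by
  rw [EK, EK, EK, ← Complex.exp_add]
  congr 1
  push_cast
  ring

lemma hilbert_apply (g : ℝ → ℂ) (x : ℝ) :
    hilbert g x = ∫ ξ : ℝ, EK x ξ * ((-Complex.I) * (Real.sign ξ : ℂ) * 𝓕 g ξ) := by
  rw [hilbert, Real.fourierInv_eq']
  congr 1
  funext ξ
  rw [EK, smul_eq_mul, show inner ℝ ξ x = ξ * x from by simp [mul_comm]]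

lemma EK_inv_apply (g : ℝ → ℂ) (x : ℝ) :
    𝓕⁻ g x = ∫ ξ : ℝ, EK x ξ * g ξ := by
  rw [Real.fourierInv_eq']
  congr 1
  funext ξ
  rw [EK, smul_eq_mul, show inner ℝ ξ x = ξ * x from by simp [mul_comm]]

lemma fi_apply (g : ℝ → ℂ) (ξ : ℝ) :
    𝓕 g ξ = ∫ y : ℝ, EK ξ (-y) * g y := by
  rw [Real.fourier_real_eq_integral_exp_smul]
  refine integral_congr_ae (ae_of_all _ fun y => ?_)
  simp only [smul_eq_mul, EK]
  congr 2
  push_cast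
  ring

/- ### Integrability on the product space -/

lemma prodIntR {A F : ℝ → ℝ} (hA : Integrable A volume) (hF : Integrable F volume) :
    Integrable (fun p : ℝ × ℝ => A (p.1 - p.2) * F p.2) (volume.prod volume) :=
  ((measurePreserving_sub_prod volume volume).integrable_comp
    (hA.mul_prod hF).aestronglyMeasurable).mpr (hA.mul_prod hF)

lemma prodIntC {A F : ℝ → ℂ} (hA : Integrable A volume) (hF : Integrable F volume) :
    Integrable (fun p : ℝ × ℝ => A (p.1 - p.2) * F p.2) (volume.prod volume) :=
  ((measurePreserving_sub_prod volume volume).integrable_comp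
    (hA.mul_prod hF).aestronglyMeasurable).mpr (hA.mul_prod hF)

lemma int_phi {A F : ℝ → ℂ} (hA : Integrable A volume) (hF : Integrable F volume)
    {ψ : ℝ × ℝ → ℂ} (hψ : AEStronglyMeasurable ψ (volume.prod volume)) {c : ℝ}
    (hc : ∀ p, ‖ψ p‖ ≤ c) :
    Integrable (fun p : ℝ × ℝ => ψ p * (A (p.1 - p.2) * F p.2)) (volume.prod volume) := by
  refine (((prodIntR hA.norm hF.norm).const_mul c).mono'
    (hψ.mul (prodIntC hA hF).aestronglyMeasurable) ?_)
  filter_upwards with p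
  rw [norm_mul, norm_mul]
  exact mul_le_mul_of_nonneg_right (hc p) (by positivity)

lemma int_prod_GF {G F : ℝ → ℝ} (hG : Integrable G volume) (hF : Integrable F volume) :
    ∫ p : ℝ × ℝ, G (p.1 - p.2) * F p.2 ∂(volume.prod volume) = (∫ ζ, G ζ) * ∫ η, F η := by
  rw [integral_prod_symm _ (prodIntR hG hF)]
  simp only
  have : ∀ y : ℝ, ∫ x : ℝ, G (x - y) * F y = (∫ ζ, G ζ) * F y := by
    intro y
    rw [integral_mul_const, integral_sub_right_eq_self G y]
  rw [integral_congr_ae (ae_of_all _ this), integral_const_mul]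

/- ### The convolution theorem -/

lemma ft_schwartz_integrable (a : 𝓢(ℝ, ℂ)) : Integrable (𝓕 ⇑a) volume := by
  have := (SchwartzMap.fourierTransformCLM ℂ a).integrable (μ := volume)
  rwa [fourierTransformCLM_apply] at this

lemma ft_schwartz_continuous (a : 𝓢(ℝ, ℂ)) : Continuous (𝓕 ⇑a) := by
  rw [← SchwartzMap.fourier_coe]
  exact (fourierTransformCLM ℂ a).continuous

lemma schwartz_inv_apply (a : 𝓢(ℝ, ℂ)) (y : ℝ) :
    a y = ∫ ζ : ℝ, EK y ζ * 𝓕 ⇑a ζ := by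
  conv_lhs => rw [← a.continuous.fourierInv_fourier_eq a.integrable (ft_schwartz_integrable a)]
  exact EK_inv_apply _ y

lemma conv_eq (a f : 𝓢(ℝ, ℂ)) (ξ : ℝ) :
    𝓕 (fun y => (a y) * (f y)) ξ = ∫ η : ℝ, 𝓕 ⇑a (ξ - η) * 𝓕 ⇑f η := by
  have hA : Integrable (𝓕 ⇑a) volume := ft_schwartz_integrable a
  have hJ : Integrable (fun p : ℝ × ℝ =>
      EK ξ (-p.1) * (EK p.1 p.2 * 𝓕 ⇑a p.2 * f p.1)) (volume.prod volume) := by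
    refine ((f.integrable.norm.mul_prod hA.norm).mono' ?_ ?_)
    · refine Continuous.aestronglyMeasurable (Continuous.mul ?_ (Continuous.mul (Continuous.mul ?_
        ((ft_schwartz_continuous a).comp continuous_snd)) (f.continuous.comp continuous_fst)))
      · unfold EK; fun_prop
      · unfold EK; fun_prop
    · filter_upwards with p
      rw [norm_mul, norm_EK, one_mul, norm_mul, norm_mul, norm_EK, one_mul]
      exact le_of_eq (mul_comm _ _)
  calc 𝓕 (fun y => (a y) * (f y)) ξ
      = ∫ y : ℝ, EK ξ (-y) * (a y * f y) := fi_apply _ ξ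
    _ = ∫ y : ℝ, ∫ ζ : ℝ, EK ξ (-y) * (EK y ζ * 𝓕 ⇑a ζ * f y) := by
        refine integral_congr_ae (ae_of_all _ fun y => ?_)
        dsimp only
        rw [schwartz_inv_apply a y, ← integral_mul_const, ← integral_const_mul]
    _ = ∫ ζ : ℝ, ∫ y : ℝ, EK ξ (-y) * (EK y ζ * 𝓕 ⇑a ζ * f y) := integral_integral_swap hJ
    _ = ∫ ζ : ℝ, 𝓕 ⇑a ζ * 𝓕 ⇑f (ξ - ζ) := by
        refine integral_congr_ae (ae_of_all _ fun ζ => ?_)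
        dsimp only
        have : ∀ y : ℝ, EK ξ (-y) * (EK y ζ * 𝓕 ⇑a ζ * f y)
            = 𝓕 ⇑a ζ * (EK (ξ - ζ) (-y) * f y) := by
          intro y
          rw [← EK_comb ξ ζ y]
          ring
        rw [integral_congr_ae (ae_of_all _ this), integral_const_mul, ← fi_apply]
    _ = ∫ η : ℝ, 𝓕 ⇑a (ξ - η) * 𝓕 ⇑f η := by
        rw [← integral_sub_left_eq_self (fun η => 𝓕 ⇑a (ξ - η) * 𝓕 ⇑f η) volume ξ]
        refine integral_congr_ae (ae_of_all _ fun ζ => ?_)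
        dsimp only
        rw [sub_sub_cancel]

end Aux
noncomputable section Comm

open Real Complex MeasureTheory SchwartzMap FourierTransform

/-- The integrand of the commutator double integral. -/
def Phi (a f : 𝓢(ℝ, ℂ)) (x : ℝ) (p : ℝ × ℝ) : ℂ :=
  EK x p.1 * (-Complex.I) * ((Real.sign p.1 - Real.sign p.2 : ℝ) : ℂ) *
    (𝓕 ⇑a (p.1 - p.2) * 𝓕 ⇑f p.2)

lemma int_phi_sgn (a f : 𝓢(ℝ, ℂ)) (x : ℝ) (w : ℝ × ℝ → ℝ)
    (hw : Measurable w) (hwb : ∀ p, |w p| ≤ 2) :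
    Integrable (fun p : ℝ × ℝ => EK x p.1 * (-Complex.I) * ((w p : ℝ) : ℂ) *
      (𝓕 ⇑a (p.1 - p.2) * 𝓕 ⇑f p.2)) (volume.prod volume) := by
  refine int_phi (ft_schwartz_integrable a) (ft_schwartz_integrable f)
    (ψ := fun p => EK x p.1 * (-Complex.I) * ((w p : ℝ) : ℂ)) ?_ (c := 2) ?_
  · refine Measurable.aestronglyMeasurable ?_
    refine Measurable.mul (Measurable.mul ?_ measurable_const) ?_
    · refine Continuous.measurable ?_
      have : Continuous fun t : ℝ => EK x t := by unfold EK; fun_prop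
      exact this.comp continuous_fst
    · exact Complex.measurable_ofReal.comp hw
  · intro p
    rw [norm_mul, norm_mul, norm_EK, one_mul, norm_neg, Complex.norm_I, one_mul,
      Complex.norm_real]
    exact hwb p

lemma integrable_Phi (a f : 𝓢(ℝ, ℂ)) (x : ℝ) :
    Integrable (Phi a f x) (volume.prod volume) := by
  refine int_phi_sgn a f x (fun p => Real.sign p.1 - Real.sign p.2) ?_ ?_
  · exact (measurable_rsign.comp measurable_fst).sub (measurable_rsign.comp measurable_snd)
  · intro p
    have h1 := abs_rsign_le p.1
    have h2 := abs_rsign_le p.2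
    calc |Real.sign p.1 - Real.sign p.2| ≤ |Real.sign p.1| + |Real.sign p.2| := abs_sub _ _
      _ ≤ 2 := by linarith

lemma hcomm_eq (a f : 𝓢(ℝ, ℂ)) (x : ℝ) :
    hcomm ⇑a ⇑f x = ∫ p : ℝ × ℝ, Phi a f x p ∂(volume.prod volume) := by
  have hΦ₁ : Integrable (fun p : ℝ × ℝ => EK x p.1 * (-Complex.I) * ((Real.sign p.1 : ℝ) : ℂ) *
      (𝓕 ⇑a (p.1 - p.2) * 𝓕 ⇑f p.2)) (volume.prod volume) := by
    refine int_phi_sgn a f x (fun p => Real.sign p.1) (measurable_rsign.comp measurable_fst) ?_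
    intro p
    linarith [abs_rsign_le p.1]
  have hΦ₂ : Integrable (fun p : ℝ × ℝ => EK x p.1 * (-Complex.I) * ((Real.sign p.2 : ℝ) : ℂ) *
      (𝓕 ⇑a (p.1 - p.2) * 𝓕 ⇑f p.2)) (volume.prod volume) := by
    refine int_phi_sgn a f x (fun p => Real.sign p.2) (measurable_rsign.comp measurable_snd) ?_
    intro p
    linarith [abs_rsign_le p.2]
  have hstep1 : hilbert (fun y => a y * f y) x = ∫ p : ℝ × ℝ,
      EK x p.1 * (-Complex.I) * ((Real.sign p.1 : ℝ) : ℂ) *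
      (𝓕 ⇑a (p.1 - p.2) * 𝓕 ⇑f p.2) ∂(volume.prod volume) := by
    have hii : (∫ ξ : ℝ, ∫ η : ℝ, EK x ξ * (-Complex.I) * ((Real.sign ξ : ℝ) : ℂ) *
        (𝓕 ⇑a (ξ - η) * 𝓕 ⇑f η)) = ∫ p : ℝ × ℝ,
        EK x p.1 * (-Complex.I) * ((Real.sign p.1 : ℝ) : ℂ) *
        (𝓕 ⇑a (p.1 - p.2) * 𝓕 ⇑f p.2) ∂(volume.prod volume) := integral_integral hΦ₁
    rw [hilbert_apply, ← hii]
    refine integral_congr_ae (ae_of_all _ fun ξ => ?_)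
    dsimp only
    rw [conv_eq a f ξ, show EK x ξ * (-Complex.I * ((Real.sign ξ : ℝ) : ℂ) *
        (∫ η : ℝ, 𝓕 ⇑a (ξ - η) * 𝓕 ⇑f η)) = (EK x ξ * (-Complex.I) * ((Real.sign ξ : ℝ) : ℂ)) *
        (∫ η : ℝ, 𝓕 ⇑a (ξ - η) * 𝓕 ⇑f η) from by ring, ← integral_const_mul]
  have hstep2 : a x * hilbert ⇑f x = ∫ p : ℝ × ℝ,
      EK x p.1 * (-Complex.I) * ((Real.sign p.2 : ℝ) : ℂ) *
      (𝓕 ⇑a (p.1 - p.2) * 𝓕 ⇑f p.2) ∂(volume.prod volume) := by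
    rw [hilbert_apply, ← integral_const_mul]
    have hin : ∀ η : ℝ, a x * (EK x η * (-Complex.I * ((Real.sign η : ℝ) : ℂ) * 𝓕 ⇑f η))
        = ∫ ξ : ℝ, EK x ξ * (-Complex.I) * ((Real.sign η : ℝ) : ℂ) *
            (𝓕 ⇑a (ξ - η) * 𝓕 ⇑f η) := by
      intro η
      rw [schwartz_inv_apply a x, ← integral_mul_const]
      rw [← integral_sub_right_eq_self (fun ζ => EK x ζ * 𝓕 ⇑a ζ *
        (EK x η * (-Complex.I * ((Real.sign η : ℝ) : ℂ) * 𝓕 ⇑f η))) η]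
      refine integral_congr_ae (ae_of_all _ fun ξ => ?_)
      dsimp only
      rw [show EK x (ξ - η) * 𝓕 ⇑a (ξ - η) * (EK x η * (-Complex.I *
          ((Real.sign η : ℝ) : ℂ) * 𝓕 ⇑f η)) = (EK x (ξ - η) * EK x η) * (-Complex.I) *
          ((Real.sign η : ℝ) : ℂ) * (𝓕 ⇑a (ξ - η) * 𝓕 ⇑f η) from by ring,
        EK_add x (ξ - η) η, sub_add_cancel]
    have hii : (∫ η : ℝ, ∫ ξ : ℝ, EK x ξ * (-Complex.I) * ((Real.sign η : ℝ) : ℂ) *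
        (𝓕 ⇑a (ξ - η) * 𝓕 ⇑f η)) = ∫ p : ℝ × ℝ,
        EK x p.1 * (-Complex.I) * ((Real.sign p.2 : ℝ) : ℂ) *
        (𝓕 ⇑a (p.1 - p.2) * 𝓕 ⇑f p.2) ∂(volume.prod volume) :=
      integral_integral_symm (hΦ₂.swap)
    rw [integral_congr_ae (ae_of_all _ hin), hii]
  rw [hcomm, hstep1, hstep2, ← integral_sub hΦ₁ hΦ₂]
  refine integral_congr_ae (ae_of_all _ fun p => ?_)
  rw [Phi]
  push_cast
  ring

lemma hcomm_bound (a f : 𝓢(ℝ, ℂ)) {G F : ℝ → ℝ} (hG : Integrable G volume)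
    (hF : Integrable F volume)
    (hGF : ∀ ξ η : ℝ, |Real.sign ξ - Real.sign η| * (‖𝓕 ⇑a (ξ - η)‖ * ‖𝓕 ⇑f η‖)
      ≤ G (ξ - η) * F η) (x : ℝ) :
    ‖hcomm ⇑a ⇑f x‖ ≤ (∫ ζ, G ζ) * ∫ η, F η := by
  rw [hcomm_eq]
  calc ‖∫ p : ℝ × ℝ, Phi a f x p ∂(volume.prod volume)‖
      ≤ ∫ p : ℝ × ℝ, ‖Phi a f x p‖ ∂(volume.prod volume) := norm_integral_le_integral_norm _
    _ ≤ ∫ p : ℝ × ℝ, G (p.1 - p.2) * F p.2 ∂(volume.prod volume) := by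
        refine integral_mono (integrable_Phi a f x).norm (prodIntR hG hF) fun p => ?_
        rw [Phi, norm_mul, norm_mul, norm_mul, norm_EK, one_mul, norm_neg, Complex.norm_I,
          one_mul, Complex.norm_real, Real.norm_eq_abs, norm_mul]
        exact hGF p.1 p.2
    _ = (∫ ζ, G ζ) * ∫ η, F η := int_prod_GF hG hF

end Comm
noncomputable section Weight

open Real MeasureTheory SchwartzMap FourierTransform

lemma poly_bound (ζ : ℝ) (n : ℕ) : ((1:ℝ) + ζ ^ 2) ^ n ≤ 2 ^ n * (1 + ‖ζ‖ ^ (2 * n)) := by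
  have h1 : (1:ℝ) + ζ ^ 2 ≤ 2 * max 1 (ζ ^ 2) := by
    have := le_max_left (1:ℝ) (ζ ^ 2)
    have := le_max_right (1:ℝ) (ζ ^ 2)
    linarith
  have h2 : ((1:ℝ) + ζ ^ 2) ^ n ≤ (2 * max 1 (ζ ^ 2)) ^ n :=
    pow_le_pow_left₀ (by positivity) h1 n
  have h3 : (max (1:ℝ) (ζ ^ 2)) ^ n ≤ 1 + (ζ ^ 2) ^ n := by
    rcases le_total (1:ℝ) (ζ ^ 2) with h | h
    · rw [max_eq_right h]
      have : (0:ℝ) ≤ (ζ ^ 2) ^ n := by positivity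
      linarith
    · rw [max_eq_left h]
      rw [one_pow]
      have : (0:ℝ) ≤ (ζ ^ 2) ^ n := by positivity
      linarith
  have h4 : ‖ζ‖ ^ (2 * n) = (ζ ^ 2) ^ n := by
    rw [pow_mul, Real.norm_eq_abs, sq_abs]
  calc ((1:ℝ) + ζ ^ 2) ^ n ≤ (2 * max 1 (ζ ^ 2)) ^ n := h2
    _ = 2 ^ n * (max (1:ℝ) (ζ ^ 2)) ^ n := mul_pow 2 _ n
    _ ≤ 2 ^ n * (1 + (ζ ^ 2) ^ n) := by
        have : (0:ℝ) < 2 ^ n := by positivity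
        nlinarith [h3]
    _ = 2 ^ n * (1 + ‖ζ‖ ^ (2 * n)) := by rw [h4]

lemma L2int (V : 𝓢(ℝ, ℂ)) (n : ℕ) :
    Integrable (fun ζ : ℝ => ((1:ℝ) + ζ ^ 2) ^ n * ‖V ζ‖) volume := by
  have h1 := V.integrable_pow_mul volume (2 * n)
  have h2 := V.integrable (μ := volume) |>.norm
  refine ((h2.add h1).const_mul ((2:ℝ) ^ n)).mono' ?_ ?_
  · exact (((continuous_const.add (continuous_pow 2)).pow n).mul
      V.continuous.norm).aestronglyMeasurable
  · filter_upwards with ζ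
    simp only [Pi.add_apply]
    have hb := poly_bound ζ n
    have h0 : (0:ℝ) ≤ ((1:ℝ) + ζ ^ 2) ^ n * ‖V ζ‖ := by positivity
    rw [Real.norm_of_nonneg h0]
    calc ((1:ℝ) + ζ ^ 2) ^ n * ‖V ζ‖ ≤ (2 ^ n * (1 + ‖ζ‖ ^ (2 * n))) * ‖V ζ‖ :=
      mul_le_mul_of_nonneg_right hb (norm_nonneg _)
    _ = 2 ^ n * (‖V ζ‖ + ‖ζ‖ ^ (2 * n) * ‖V ζ‖) := by ring

lemma sq_int (V : 𝓢(ℝ, ℂ)) {s : ℝ} (_hs : 0 ≤ s) :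
    Integrable (fun ζ : ℝ => ((1:ℝ) + ζ ^ 2) ^ s * ‖V ζ‖ ^ 2) volume := by
  set n := ⌈s⌉₊ with hn
  set C := (SchwartzMap.seminorm ℝ 0 0) V with hC
  have hCnn : (0:ℝ) ≤ C := apply_nonneg _ _
  refine ((L2int V n).const_mul C).mono' ?_ ?_
  · refine Continuous.aestronglyMeasurable (Continuous.mul ?_ (V.continuous.norm.pow 2))
    exact (continuous_const.add (continuous_pow 2)).rpow_const
      (fun ζ => Or.inl (by simp only [Pi.add_apply]; positivity))
  · filter_upwards with ζ
    have h1 : ((1:ℝ) + ζ ^ 2) ^ s ≤ ((1:ℝ) + ζ ^ 2) ^ (n : ℝ) :=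
      Real.rpow_le_rpow_of_exponent_le (by nlinarith [sq_nonneg ζ]) (Nat.le_ceil s)
    have h2 : ((1:ℝ) + ζ ^ 2) ^ (n : ℝ) = ((1:ℝ) + ζ ^ 2) ^ (n : ℕ) :=
      Real.rpow_natCast _ n
    have h3 : ‖V ζ‖ ≤ C := V.norm_le_seminorm ℝ ζ
    have h0 : (0:ℝ) ≤ ((1:ℝ) + ζ ^ 2) ^ s := Real.rpow_nonneg (by positivity) s
    rw [Real.norm_of_nonneg (by positivity)]
    calc ((1:ℝ) + ζ ^ 2) ^ s * ‖V ζ‖ ^ 2 ≤ ((1:ℝ) + ζ ^ 2) ^ (n:ℕ) * ‖V ζ‖ ^ 2 := by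
          rw [← h2]
          exact mul_le_mul_of_nonneg_right h1 (by positivity)
      _ = (((1:ℝ) + ζ ^ 2) ^ (n:ℕ) * ‖V ζ‖) * ‖V ζ‖ := by ring
      _ ≤ (((1:ℝ) + ζ ^ 2) ^ (n:ℕ) * ‖V ζ‖) * C := by
          refine mul_le_mul_of_nonneg_left h3 (by positivity)
      _ = C * (((1:ℝ) + ζ ^ 2) ^ (n:ℕ) * ‖V ζ‖) := by ring

lemma kq_integrable {s : ℝ} (hs : 1 / 2 < s) :
    Integrable (fun ζ : ℝ => ((1:ℝ) + ζ ^ 2) ^ (-s)) volume := by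
  have h := integrable_rpow_neg_one_add_norm_sq (E := ℝ) (μ := volume) (r := 2 * s)
    (by simpa using (by linarith : (1:ℝ) < 2 * s))
  refine h.congr (ae_of_all _ fun ζ => ?_)
  dsimp only
  rw [Real.norm_eq_abs, sq_abs]
  congr 1
  ring

end Weight
noncomputable section Hoelder

open Real MeasureTheory SchwartzMap FourierTransform
open scoped ENNReal

lemma l1_fourier_le (V : 𝓢(ℝ, ℂ)) {s : ℝ} (hs : 1 / 2 < s) :
    ∫ ζ : ℝ, ‖𝓕 ⇑V ζ‖ ≤
      (∫ ζ : ℝ, ((1:ℝ) + ζ ^ 2) ^ (-s)) ^ (1/2 : ℝ) * sobolev s ⇑V := by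
  have hs0 : (0:ℝ) ≤ s := by linarith
  have hpos : ∀ ζ : ℝ, (0:ℝ) < 1 + ζ ^ 2 := fun ζ => by positivity
  set W := fourierTransformCLM ℂ V with hW
  have hWc : ⇑W = 𝓕 ⇑V := by rw [hW, fourierTransformCLM_apply, SchwartzMap.fourier_coe]
  set F : ℝ → ℂ := fun ζ => ((((1:ℝ) + ζ ^ 2) ^ (s/2) : ℝ) : ℂ) * 𝓕 ⇑V ζ with hF
  have hFnorm : ∀ ζ : ℝ, ‖F ζ‖ = ((1:ℝ) + ζ ^ 2) ^ (s/2) * ‖𝓕 ⇑V ζ‖ := by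
    intro ζ
    rw [hF, norm_mul, Complex.norm_real, Real.norm_eq_abs,
      abs_of_nonneg (Real.rpow_nonneg (by positivity) _)]
  have hFcont : Continuous F := by
    refine Continuous.mul ?_ (ft_schwartz_continuous V)
    exact Complex.continuous_ofReal.comp ((continuous_const.add (continuous_pow 2)).rpow_const
      (fun ζ => Or.inl (by simp only [Pi.add_apply]; positivity)))
  have hF2int : Integrable (fun ζ : ℝ => ‖F ζ‖ ^ 2) volume := by
    refine (sq_int W hs0).congr (ae_of_all _ fun ζ => ?_)
    dsimp only
    rw [hWc]
    rw [show (((1:ℝ) + ζ ^ 2) ^ s) = ((1:ℝ) + ζ ^ 2) ^ (s/2) * ((1:ℝ) + ζ ^ 2) ^ (s/2) from by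
      rw [← Real.rpow_add (hpos ζ)]; norm_num]
    rw [hFnorm ζ]
    ring
  have hFmem : MemLp F 2 volume :=
    (memLp_two_iff_integrable_sq_norm hFcont.aestronglyMeasurable).mpr hF2int
  have hsob : sobolev s ⇑V = (∫ ζ : ℝ, ‖F ζ‖ ^ 2) ^ (1/2 : ℝ) := by
    rw [sobolev, ← hF]
    rw [hFmem.eLpNorm_eq_integral_rpow_norm two_ne_zero ENNReal.ofNat_ne_top]
    rw [ENNReal.toReal_ofReal (by positivity)]
    rw [show ((2:ℝ≥0∞).toReal) = ((2:ℕ):ℝ) from by norm_num]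
    simp_rw [Real.rpow_natCast]
    rw [← one_div]
    norm_num
  have hconj : Real.HolderConjugate 2 2 := Real.holderConjugate_iff.mpr ⟨one_lt_two, by norm_num⟩
  have hofr : ENNReal.ofReal (2:ℝ) = 2 := by
    rw [ENNReal.ofReal_ofNat]
  have hf_mem : MemLp (fun ζ : ℝ => ((1:ℝ) + ζ ^ 2) ^ (-(s/2))) (ENNReal.ofReal 2) volume := by
    rw [hofr]
    refine (memLp_two_iff_integrable_sq ?_).mpr ?_
    · exact ((continuous_const.add (continuous_pow 2)).rpow_const
        (fun ζ => Or.inl (by simp only [Pi.add_apply]; positivity))).aestronglyMeasurable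
    · refine (kq_integrable hs).congr (ae_of_all _ fun ζ => ?_)
      dsimp only
      rw [← Real.rpow_natCast ((((1:ℝ) + ζ ^ 2)) ^ (-(s/2))) 2, ← Real.rpow_mul (hpos ζ).le]
      congr 1
      push_cast
      ring
  have hg_mem : MemLp (fun ζ : ℝ => ‖F ζ‖) (ENNReal.ofReal 2) volume := by
    rw [hofr]
    exact hFmem.norm
  have happ := integral_mul_le_Lp_mul_Lq_of_nonneg hconj
    (ae_of_all _ fun ζ : ℝ => Real.rpow_nonneg (by positivity) (-(s/2)))
    (ae_of_all _ fun ζ : ℝ => norm_nonneg (F ζ)) hf_mem hg_mem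
  have hL : (∫ ζ : ℝ, ((1:ℝ) + ζ ^ 2) ^ (-(s/2)) * ‖F ζ‖) = ∫ ζ : ℝ, ‖𝓕 ⇑V ζ‖ := by
    refine integral_congr_ae (ae_of_all _ fun ζ => ?_)
    dsimp only
    rw [hFnorm ζ, ← mul_assoc, ← Real.rpow_add (hpos ζ)]
    norm_num
  have hR1 : (∫ ζ : ℝ, (((1:ℝ) + ζ ^ 2) ^ (-(s/2))) ^ (2:ℝ)) =
      ∫ ζ : ℝ, ((1:ℝ) + ζ ^ 2) ^ (-s) := by
    refine integral_congr_ae (ae_of_all _ fun ζ => ?_)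
    dsimp only
    rw [← Real.rpow_mul (hpos ζ).le]
    congr 1
    ring
  have hR2 : (∫ ζ : ℝ, ‖F ζ‖ ^ (2:ℝ)) = ∫ ζ : ℝ, ‖F ζ‖ ^ 2 := by
    refine integral_congr_ae (ae_of_all _ fun ζ => ?_)
    dsimp only
    rw [← Real.rpow_natCast ‖F ζ‖ 2]
    norm_num
  rw [hL, hR1, hR2] at happ
  rw [hsob]
  exact happ

end Hoelder
noncomputable section Final

open Real MeasureTheory SchwartzMap FourierTransform

lemma Loo_le_of_bound {h : ℝ → ℂ} {B : ℝ} (hB : 0 ≤ B) (hb : ∀ x, ‖h x‖ ≤ B) : Loo h ≤ B := by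
  rw [Loo, eLpNorm_exponent_top]
  exact ENNReal.toReal_le_of_le_ofReal hB (eLpNormEssSup_le_of_ae_bound (ae_of_all _ hb))

lemma abs_sgn_sub_le (ξ η : ℝ) : |Real.sign ξ - Real.sign η| ≤ 2 := by
  have h1 := abs_rsign_le ξ
  have h2 := abs_rsign_le η
  calc |Real.sign ξ - Real.sign η| ≤ |Real.sign ξ| + |Real.sign η| := abs_sub _ _
    _ ≤ 2 := by linarith

lemma schwartz_deriv_eq (u : 𝓢(ℝ, ℂ)) : deriv ⇑u = ⇑(derivCLM ℝ ℂ u) :=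
  funext fun x => (derivCLM_apply (𝕜 := ℝ) u x).symm

lemma norm_tpiz (t : ℝ) (z : ℂ) :
    ‖2 * (π : ℂ) * Complex.I * (t : ℂ) * z‖ = 2 * π * |t| * ‖z‖ := by
  simp [map_mul, Complex.norm_I, Complex.norm_real,
    abs_of_pos Real.pi_pos]

lemma fourier_deriv_schwartz (u : 𝓢(ℝ, ℂ)) (ξ : ℝ) :
    𝓕 (deriv ⇑u) ξ = 2 * (π : ℂ) * Complex.I * (ξ : ℂ) * 𝓕 ⇑u ξ := by
  have h := Real.fourier_deriv u.integrable u.differentiable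
    (by rw [schwartz_deriv_eq u]; exact (derivCLM ℝ ℂ u).integrable)
  rw [h]
  dsimp only
  rw [smul_eq_mul]

lemma hGF1 (A B : 𝓢(ℝ, ℂ)) (ξ η : ℝ) :
    |Real.sign ξ - Real.sign η| * (‖𝓕 ⇑A (ξ - η)‖ * ‖𝓕 ⇑B η‖)
      ≤ (2 * ‖𝓕 ⇑A (ξ - η)‖) * ‖𝓕 ⇑B η‖ := by
  have h2 := abs_sgn_sub_le ξ η
  nlinarith [mul_nonneg (norm_nonneg (𝓕 ⇑A (ξ - η))) (norm_nonneg (𝓕 ⇑B η)),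
    abs_nonneg (Real.sign ξ - Real.sign η)]

lemma hGF2 (u : 𝓢(ℝ, ℂ)) (ξ η : ℝ) :
    |Real.sign ξ - Real.sign η| * (‖𝓕 ⇑u (ξ - η)‖ * ‖𝓕 (deriv (deriv ⇑u)) η‖)
      ≤ (2 * ‖𝓕 (deriv ⇑u) (ξ - η)‖) * ‖𝓕 (deriv ⇑u) η‖ := by
  by_cases hsgn : Real.sign ξ = Real.sign η
  · rw [hsgn, sub_self, abs_zero, zero_mul]
    positivity
  · have hle : |η| ≤ |ξ - η| := abs_sub_sign_le hsgn
    have hΔ := abs_sgn_sub_le ξ η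
    have e1 : ‖𝓕 (deriv ⇑u) (ξ - η)‖ = 2 * π * |ξ - η| * ‖𝓕 ⇑u (ξ - η)‖ := by
      rw [fourier_deriv_schwartz u, norm_tpiz]
    have e2 : ‖𝓕 (deriv (deriv ⇑u)) η‖ = 2 * π * |η| * ‖𝓕 (deriv ⇑u) η‖ := by
      rw [show deriv (deriv ⇑u) = deriv ⇑(derivCLM ℝ ℂ u) from by rw [schwartz_deriv_eq u],
        fourier_deriv_schwartz (derivCLM ℝ ℂ u) η, norm_tpiz, ← schwartz_deriv_eq u]
    rw [e1, e2]
    calc |Real.sign ξ - Real.sign η| * (‖𝓕 ⇑u (ξ - η)‖ * (2 * π * |η| * ‖𝓕 (deriv ⇑u) η‖))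
        = (2 * π) * (|Real.sign ξ - Real.sign η| * |η|) *
            (‖𝓕 ⇑u (ξ - η)‖ * ‖𝓕 (deriv ⇑u) η‖) := by ring
      _ ≤ (2 * π) * (2 * |ξ - η|) * (‖𝓕 ⇑u (ξ - η)‖ * ‖𝓕 (deriv ⇑u) η‖) := by
          refine mul_le_mul_of_nonneg_right ?_ (by positivity)
          refine mul_le_mul_of_nonneg_left ?_ (by positivity)
          calc |Real.sign ξ - Real.sign η| * |η| ≤ 2 * |η| :=
                mul_le_mul_of_nonneg_right hΔ (abs_nonneg η)
            _ ≤ 2 * |ξ - η| := by linarith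
      _ = (2 * (2 * π * |ξ - η| * ‖𝓕 ⇑u (ξ - η)‖)) * ‖𝓕 (deriv ⇑u) η‖ := by ring

theorem stmt3 (δ : ℝ) (hδ : 0 < δ) :
    ∃ C : ℝ, 0 < C ∧ ∀ u : 𝓢(ℝ, ℂ),
      Loo (hcomm (deriv ⇑u) (deriv ⇑u)) + Loo (hcomm ⇑u (iteratedDeriv 2 ⇑u))
        ≤ C * sobolev (1 / 2 + δ) (deriv ⇑u) ^ 2 := by
  set s : ℝ := 1 / 2 + δ with hs_def
  have hs : 1 / 2 < s := by rw [hs_def]; linarith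
  set Kq : ℝ := ∫ ζ : ℝ, ((1:ℝ) + ζ ^ 2) ^ (-s) with hKq_def
  have hKq0 : 0 ≤ Kq :=
    integral_nonneg fun ζ => Real.rpow_nonneg (by positivity) _
  refine ⟨4 * Kq + 1, by positivity, fun u => ?_⟩
  set V : 𝓢(ℝ, ℂ) := derivCLM ℝ ℂ u with hV_def
  have hVc : deriv ⇑u = ⇑V := schwartz_deriv_eq u
  set N : ℝ := ∫ ζ : ℝ, ‖𝓕 ⇑V ζ‖ with hN_def
  have hN0 : 0 ≤ N := integral_nonneg fun ζ => norm_nonneg _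
  set S : ℝ := sobolev s ⇑V with hS_def
  have hS0 : 0 ≤ S := ENNReal.toReal_nonneg
  have hNS : N ≤ Kq ^ (1/2 : ℝ) * S := l1_fourier_le V hs
  have hN2 : N ^ 2 ≤ Kq * S ^ 2 := by
    have hKhalf : Kq ^ (1/2 : ℝ) * Kq ^ (1/2 : ℝ) = Kq := by
      rw [show Kq ^ (1/2:ℝ) * Kq ^ (1/2:ℝ) = (Kq ^ (1/2:ℝ)) ^ (2:ℕ) from by ring,
        ← Real.rpow_natCast (Kq ^ (1/2:ℝ)) 2, ← Real.rpow_mul hKq0]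
      norm_num
    have h := mul_le_mul hNS hNS hN0 (by positivity)
    nlinarith [h, hKhalf]
  have hVhat_int : Integrable (fun ζ : ℝ => ‖𝓕 ⇑V ζ‖) volume := (ft_schwartz_integrable V).norm
  have hG_int : Integrable (fun ζ : ℝ => 2 * ‖𝓕 ⇑V ζ‖) volume := hVhat_int.const_mul 2
  have hGint_eq : (∫ ζ : ℝ, 2 * ‖𝓕 ⇑V ζ‖) = 2 * N := by
    rw [hN_def, integral_const_mul]
  -- term 1
  have ht1 : Loo (hcomm (deriv ⇑u) (deriv ⇑u)) ≤ 2 * N * N := by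
    rw [hVc]
    refine Loo_le_of_bound (by positivity) fun x => ?_
    have h := hcomm_bound V V hG_int hVhat_int (fun ξ η => hGF1 V V ξ η) x
    rwa [hGint_eq, ← hN_def] at h
  -- term 2
  have hu2 : iteratedDeriv 2 ⇑u = ⇑(derivCLM ℝ ℂ V) := by
    rw [show (2 : ℕ) = 1 + 1 from rfl, iteratedDeriv_succ, iteratedDeriv_one,
      ← schwartz_deriv_eq V, ← hVc]
  have ht2 : Loo (hcomm ⇑u (iteratedDeriv 2 ⇑u)) ≤ 2 * N * N := by
    rw [hu2]
    refine Loo_le_of_bound (by positivity) fun x => ?_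
    have hgf : ∀ ξ η : ℝ, |Real.sign ξ - Real.sign η| *
        (‖𝓕 ⇑u (ξ - η)‖ * ‖𝓕 ⇑(derivCLM ℝ ℂ V) η‖)
        ≤ (2 * ‖𝓕 ⇑V (ξ - η)‖) * ‖𝓕 ⇑V η‖ := by
      intro ξ η
      have := hGF2 u ξ η
      rwa [hVc, show deriv ⇑V = ⇑(derivCLM ℝ ℂ V) from schwartz_deriv_eq V] at this
    have h := hcomm_bound u (derivCLM ℝ ℂ V) hG_int hVhat_int hgf x
    rwa [hGint_eq, ← hN_def] at h
  -- combine
  have hsob_eq : sobolev (1 / 2 + δ) (deriv ⇑u) = S := by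
    rw [hS_def, hVc]
  rw [hsob_eq]
  calc Loo (hcomm (deriv ⇑u) (deriv ⇑u)) + Loo (hcomm ⇑u (iteratedDeriv 2 ⇑u))
      ≤ 2 * N * N + 2 * N * N := add_le_add ht1 ht2
    _ = 4 * N ^ 2 := by ring
    _ ≤ 4 * (Kq * S ^ 2) := by linarith
    _ ≤ (4 * Kq + 1) * S ^ 2 := by nlinarith [sq_nonneg S]

end Final
end

section
/- For a Schwartz function a and a Schwartz function f on ℝ, if the Fourier transform of a is supported in {|ξ| ≤ R} and that of f is supported in {|ξ| ≥ 2R}, then [H, a]f = 0, i.e., the commutator of the Hilbert transform with multiplication by a annihilates f. -/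
open MeasureTheory SchwartzMap FourierTransform

noncomputable section AuxHilbert

namespace HilbAux

/-- The character `e^{2πit}` as a complex number. -/
def eC (t : ℝ) : ℂ := Complex.exp ((2 * Real.pi * t : ℝ) * Complex.I)

lemma eC_norm (t : ℝ) : ‖eC t‖ = 1 := by
  simpa [eC] using Complex.norm_exp_ofReal_mul_I (2 * Real.pi * t)

lemma eC_add (s t : ℝ) : eC (s + t) = eC s * eC t := by
  rw [eC, eC, eC, ← Complex.exp_add]
  congr 1
  push_cast
  ring

lemma eC_continuous : Continuous eC := by
  unfold eC; fun_prop

lemma fourier_eq (g : ℝ → ℂ) (ξ : ℝ) : 𝓕 g ξ = ∫ x : ℝ, eC (-(x * ξ)) * g x := by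
  rw [Real.fourier_real_eq]
  simp_rw [Circle.smul_def, Real.fourierChar_apply]
  rfl

lemma fourierInv_eq (g : ℝ → ℂ) (x : ℝ) : 𝓕⁻ g x = ∫ ξ : ℝ, eC (ξ * x) * g ξ := by
  rw [Real.fourierInv_eq_fourier_neg, fourier_eq]
  congr 1 with ξ
  norm_num [mul_comm]

/-- Fourier transform of `φ · 𝓕⁻ G` is the convolution `𝓕φ ∗ G`. -/
lemma conv_lemma (φ : 𝓢(ℝ, ℂ)) {G : ℝ → ℂ} (hG : Integrable G) (ξ : ℝ) :
    𝓕 (fun y => φ y * 𝓕⁻ G y) ξ = ∫ η : ℝ, 𝓕 (⇑φ) (ξ - η) * G η := by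
  have key : Integrable (Function.uncurry fun y η : ℝ =>
      eC (-(y * (ξ - η))) * φ y * G η) (volume.prod volume) := by
    have hmeas : AEStronglyMeasurable (Function.uncurry fun y η : ℝ =>
        eC (-(y * (ξ - η))) * φ y * G η) (volume.prod volume) := by
      apply AEStronglyMeasurable.mul
      · apply Continuous.aestronglyMeasurable
        apply Continuous.mul
        · exact eC_continuous.comp (by fun_prop)
        · exact φ.continuous.comp continuous_fst
      · exact hG.1.comp_snd
    refine Integrable.mono' ((φ.integrable.norm.mul_prod hG.norm)) hmeas
      (Filter.Eventually.of_forall fun p => ?_)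
    calc ‖eC (-(p.1 * (ξ - p.2))) * φ p.1 * G p.2‖
        = ‖eC (-(p.1 * (ξ - p.2)))‖ * ‖φ p.1‖ * ‖G p.2‖ := by rw [norm_mul, norm_mul]
      _ ≤ ‖φ p.1‖ * ‖G p.2‖ := le_of_eq (by rw [eC_norm]; ring)
  calc 𝓕 (fun y => φ y * 𝓕⁻ G y) ξ
      = ∫ y : ℝ, ∫ η : ℝ, eC (-(y * (ξ - η))) * φ y * G η := by
        rw [fourier_eq]
        refine integral_congr_ae (Filter.Eventually.of_forall fun y => ?_)
        dsimp only
        rw [fourierInv_eq, ← mul_assoc, ← MeasureTheory.integral_const_mul]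
        refine integral_congr_ae (Filter.Eventually.of_forall fun η => ?_)
        dsimp only
        rw [show -(y * (ξ - η)) = -(y * ξ) + η * y by ring, eC_add]
        ring
    _ = ∫ η : ℝ, ∫ y : ℝ, eC (-(y * (ξ - η))) * φ y * G η := integral_integral_swap key
    _ = ∫ η : ℝ, 𝓕 (⇑φ) (ξ - η) * G η := by
        refine integral_congr_ae (Filter.Eventually.of_forall fun η => ?_)
        dsimp only
        rw [fourier_eq, ← MeasureTheory.integral_mul_const]

lemma measurable_realSign : Measurable Real.sign := by
  have : Real.sign = fun r : ℝ => if r < 0 then (-1 : ℝ) else if 0 < r then 1 else 0 :=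
    funext fun r => rfl
  rw [this]
  exact Measurable.ite (measurableSet_lt measurable_id measurable_const) measurable_const
    (Measurable.ite (measurableSet_lt measurable_const measurable_id) measurable_const
      measurable_const)

lemma sign_eq_of_near {R ξ η : ℝ} (hR : 0 < R) (h1 : |ξ - η| ≤ R) (h2 : 2 * R ≤ |η|) :
    Real.sign ξ = Real.sign η := by
  rcases abs_le.mp h1 with ⟨hl, hr⟩
  rcases le_abs.mp h2 with hp | hn
  · have hη : 0 < η := by linarith
    have hξ : 0 < ξ := by linarith
    rw [Real.sign_of_pos hξ, Real.sign_of_pos hη]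
  · have hη : η < 0 := by linarith
    have hξ : ξ < 0 := by linarith
    rw [Real.sign_of_neg hξ, Real.sign_of_neg hη]

lemma fourier_integrable (f : 𝓢(ℝ, ℂ)) : Integrable (𝓕 ⇑f) := by
  rw [← fourier_coe]
  exact (𝓕 f).integrable

lemma integrable_mF (f : 𝓢(ℝ, ℂ)) :
    Integrable (fun η : ℝ => (-Complex.I) * (Real.sign η : ℂ) * 𝓕 (⇑f) η) := by
  refine (fourier_integrable f).bdd_mul (c := 1) ?_ (Filter.Eventually.of_forall fun η => ?_)
  · exact ((Complex.measurable_ofReal.comp measurable_realSign).const_mul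
      (-Complex.I)).aestronglyMeasurable
  · rw [norm_mul, norm_neg, Complex.norm_I, one_mul, Complex.norm_real, Real.norm_eq_abs]
    rcases Real.sign_apply_eq η with h | h | h <;> rw [h] <;> norm_num

lemma fourierInv_continuous {G : ℝ → ℂ} (hG : Integrable G) : Continuous (𝓕⁻ G) := by
  have : 𝓕⁻ G = 𝓕 (fun x => G (-x)) := Real.fourierInv_eq_fourier_comp_neg G
  rw [this]
  exact VectorFourier.fourierIntegral_continuous Real.continuous_fourierChar
    (by exact continuous_inner) (hG.comp_neg)

lemma fourierInv_bound {G : ℝ → ℂ} (x : ℝ) : ‖𝓕⁻ G x‖ ≤ ∫ η : ℝ, ‖G η‖ := by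
  rw [Real.fourierInv_eq_fourier_neg]
  exact VectorFourier.norm_fourierIntegral_le_integral_norm _ _ _ _ _

end HilbAux

end AuxHilbert

/-- The commutator `[H, a]` annihilates functions at much higher frequency than `a`. -/
theorem stmt16 (R : ℝ) (hR : 0 < R) (a f : 𝓢(ℝ, ℂ))
    (ha : ∀ ξ : ℝ, R < |ξ| → 𝓕 (⇑a) ξ = 0)
    (hf : ∀ ξ : ℝ, |ξ| < 2 * R → 𝓕 (⇑f) ξ = 0) :
    ∀ x : ℝ, hcomm ⇑a ⇑f x = 0 := by
  intro x
  open HilbAux in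
  set mF : ℝ → ℂ := fun η => (-Complex.I) * (Real.sign η : ℂ) * 𝓕 (⇑f) η with hmF_def
  have hmF : Integrable mF := HilbAux.integrable_mF f
  set g : ℝ → ℂ := 𝓕⁻ mF with hg_def
  have hg_cont : Continuous g := HilbAux.fourierInv_continuous hmF
  have hg_bdd : ∃ C, ∀ y : ℝ, ‖g y‖ ≤ C := ⟨_, fun y => HilbAux.fourierInv_bound y⟩
  have hfinv : 𝓕⁻ (𝓕 ⇑f) = ⇑f :=
    f.continuous.fourierInv_fourier_eq f.integrable (HilbAux.fourier_integrable f)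
  have hconv1 : ∀ ξ : ℝ, 𝓕 (fun y => a y * f y) ξ = ∫ η : ℝ, 𝓕 (⇑a) (ξ - η) * 𝓕 (⇑f) η := by
    intro ξ
    have h := HilbAux.conv_lemma a (HilbAux.fourier_integrable f) ξ
    simp only [hfinv] at h
    exact h
  have hconv2 : ∀ ξ : ℝ, 𝓕 (fun y => a y * g y) ξ = ∫ η : ℝ, 𝓕 (⇑a) (ξ - η) * mF η :=
    fun ξ => HilbAux.conv_lemma a hmF ξ
  have hkey : ∀ ξ : ℝ, 𝓕 (fun y => a y * g y) ξ
      = (-Complex.I) * (Real.sign ξ : ℂ) * 𝓕 (fun y => a y * f y) ξ := by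
    intro ξ
    rw [hconv2 ξ, hconv1 ξ, ← MeasureTheory.integral_const_mul]
    refine integral_congr_ae (Filter.Eventually.of_forall fun η => ?_)
    dsimp only
    by_cases h1 : 𝓕 (⇑a) (ξ - η) = 0
    · simp [h1]
    by_cases h2 : 𝓕 (⇑f) η = 0
    · simp [hmF_def, h2]
    have hd1 : |ξ - η| ≤ R := by
      by_contra h
      exact h1 (ha _ (lt_of_not_ge h))
    have hd2 : 2 * R ≤ |η| := by
      by_contra h
      exact h2 (hf _ (lt_of_not_ge h))
    rw [hmF_def]
    dsimp only
    rw [HilbAux.sign_eq_of_near hR hd1 hd2]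
    ring
  have hag_int : Integrable (fun y => a y * g y) := by
    have h := (a.integrable (μ := volume)).bdd_mul hg_cont.aestronglyMeasurable (Filter.Eventually.of_forall hg_bdd.choose_spec)
    exact h.congr (Filter.Eventually.of_forall fun y => mul_comm _ _)
  have hag_fint : Integrable (𝓕 (fun y => a y * g y)) := by
    have hc : Integrable
        (convolution mF (𝓕 ⇑a) (ContinuousLinearMap.mul ℝ ℂ) volume) volume :=
      hmF.integrable_convolution _ (HilbAux.fourier_integrable a)
    refine hc.congr (Filter.Eventually.of_forall fun ξ => ?_)
    rw [convolution_def, hconv2 ξ]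
    refine integral_congr_ae (Filter.Eventually.of_forall fun η => ?_)
    simp [mul_comm]
  have hinv : 𝓕⁻ (𝓕 (fun y => a y * g y)) x = a x * g x :=
    hag_int.fourierInv_fourier_eq hag_fint (a.continuous.mul hg_cont).continuousAt
  have hH : hilbert (fun y => a y * f y) x = 𝓕⁻ (𝓕 (fun y => a y * g y)) x := by
    unfold hilbert
    refine congrFun (congrArg _ ?_) x
    funext ξ
    exact (hkey ξ).symm
  have hHf : hilbert ⇑f = g := rfl
  simp only [hcomm, hH, hinv, hHf, sub_self]
end
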